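/- arXiv:2501.09779 — 5 statements merged into one kernel-verified Lean document; each statement's English description precedes it below -/
import Mathlib

section
/- Let G be a finite simple graph on n ≥ 3 vertices that is not complete. Form G' by adding a disjoint set of n new vertices forming a clique K_n, together with a perfect matching joining each original vertex to a distinct new vertex. Then the only n-vertex clique in G' is the newly added clique; i.e., any set of n vertices of G' inducing a complete subgraph equals the set of new vertices. -/
open SimpleGraph

/-- Matching-plus-clique extension: old vertices `Sum.inl v`, new clique vertices `Sum.inr v`,
with `Sum.inr v` the matching partner of `Sum.inl v`. -/
def ext {V : Type*} (G : SimpleGraph V) : SimpleGraph (V ⊕ V) where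
  Adj x y :=
    match x, y with
    | Sum.inl a, Sum.inl b => G.Adj a b
    | Sum.inr a, Sum.inr b => a ≠ b
    | Sum.inl a, Sum.inr b => a = b
    | Sum.inr a, Sum.inl b => a = b
  symm := by
    constructor
    rintro (a | a) (b | b) h <;> simp_all
    · exact h.symm
    · exact fun e => h e.symm
  loopless := by
    constructor
    rintro (a | a) h <;> simp_all

instance {V : Type*} (G : SimpleGraph V) [DecidableEq V] [DecidableRel G.Adj] :
    DecidableRel (ext G).Adj
  | Sum.inl a, Sum.inl b => inferInstanceAs (Decidable (G.Adj a b))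
  | Sum.inl a, Sum.inr b => inferInstanceAs (Decidable (a = b))
  | Sum.inr a, Sum.inl b => inferInstanceAs (Decidable (a = b))
  | Sum.inr a, Sum.inr b => inferInstanceAs (Decidable (a ≠ b))

instance {V : Type*} (G : SimpleGraph V) : Group (G ≃g G) where
  mul a b := b.trans a
  one := SimpleGraph.Iso.refl
  inv := SimpleGraph.Iso.symm
  mul_assoc a b c := rfl
  one_mul a := rfl
  mul_one a := rfl
  inv_mul_cancel a := by
    have : a.trans a.symm = SimpleGraph.Iso.refl := by
      ext v
      exact a.toEquiv.symm_apply_apply v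
    exact this

theorem stmt0 {V : Type*} [Fintype V] [DecidableEq V] (G : SimpleGraph V)
    (hn : 3 ≤ Fintype.card V) (hnc : G ≠ ⊤)
    (S : Finset (V ⊕ V)) (hcard : S.card = Fintype.card V)
    (hclique : (ext G).IsClique (S : Set (V ⊕ V))) :
    S = Finset.univ.image Sum.inr := by
  by_cases h : ∃ a, Sum.inl a ∈ S
  · obtain ⟨a, ha⟩ := h
    by_cases h2 : ∃ b, b ≠ a ∧ Sum.inl b ∈ S
    · obtain ⟨b, hba, hb⟩ := h2
      -- no inr in S
      exfalso
      have hnoinr : ∀ c, Sum.inr c ∉ S := by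
        intro c hc
        have h1 : a = c := hclique ha hc (by simp)
        have h2 : b = c := hclique hb hc (by simp)
        exact hba (h2.trans h1.symm)
      have hsub : S ⊆ Finset.univ.image Sum.inl := by
        intro x hx
        rcases x with x | x
        · simp
        · exact absurd hx (hnoinr x)
      have hSeq : S = Finset.univ.image Sum.inl := by
        apply Finset.eq_of_subset_of_card_le hsub
        rw [Finset.card_image_of_injective _ Sum.inl_injective, Finset.card_univ, hcard]
      apply hnc
      ext x y
      simp only [SimpleGraph.top_adj]
      constructor
      · exact fun h => h.ne
      · intro hxy
        have hx : Sum.inl x ∈ S := by rw [hSeq]; simp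
        have hy : Sum.inl y ∈ S := by rw [hSeq]; simp
        exact hclique hx hy (by simp [hxy])
    · -- a is the only inl; all inr c ∈ S have c = a, so S ⊆ {inl a, inr a}
      exfalso
      push_neg at h2
      have hsub : S ⊆ {Sum.inl a, Sum.inr a} := by
        intro x hx
        rcases x with x | x
        · have hxa : x = a := by
            by_contra hne
            exact h2 x hne hx
          simp [hxa]
        · have : a = x := hclique ha hx (by simp)
          simp [this]
      have := Finset.card_le_card hsub
      have h2card : ({Sum.inl a, Sum.inr a} : Finset (V ⊕ V)).card ≤ 2 :=
        Finset.card_insert_le _ _ |>.trans (by simp)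
      omega
  · push_neg at h
    have hsub : S ⊆ Finset.univ.image Sum.inr := by
      intro x hx
      rcases x with x | x
      · exact absurd hx (h x)
      · simp
    apply Finset.eq_of_subset_of_card_le hsub
    rw [Finset.card_image_of_injective _ Sum.inr_injective, Finset.card_univ, hcard]
end

section
/- Let G be a finite simple graph on n ≥ 3 vertices that is not complete, and let G' be obtained by adding a disjoint clique on n new vertices and a perfect matching between old and new vertices. Then every automorphism φ of G' maps the set of new vertices to itself (and hence the set of old vertices to itself). -/
open SimpleGraph

lemma ext_adj_rr {V : Type*} (G : SimpleGraph V) (a b : V) :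
    (ext G).Adj (Sum.inr a) (Sum.inr b) ↔ a ≠ b := Iff.rfl

lemma ext_adj_rl {V : Type*} (G : SimpleGraph V) (a b : V) :
    (ext G).Adj (Sum.inr a) (Sum.inl b) ↔ a = b := Iff.rfl

lemma ext_adj_lr {V : Type*} (G : SimpleGraph V) (a b : V) :
    (ext G).Adj (Sum.inl a) (Sum.inr b) ↔ a = b := Iff.rfl

lemma ext_adj_ll {V : Type*} (G : SimpleGraph V) (a b : V) :
    (ext G).Adj (Sum.inl a) (Sum.inl b) ↔ G.Adj a b := Iff.rfl

theorem stmt1 {V : Type*} [Fintype V] (G : SimpleGraph V)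
    (hn : 3 ≤ Fintype.card V) (hnc : G ≠ ⊤) (φ : ext G ≃g ext G) :
    (∀ v : V, ∃ w : V, φ (Sum.inr v) = Sum.inr w) ∧
    (∀ v : V, ∃ w : V, φ (Sum.inl v) = Sum.inl w) := by
  classical
  have hinj : Function.Injective φ := φ.toEquiv.injective
  have hadj : ∀ d e : V, d ≠ e → (ext G).Adj (φ (Sum.inr d)) (φ (Sum.inr e)) :=
    fun d e hde => φ.map_adj_iff.mpr ((ext_adj_rr G d e).mpr hde)
  have key : ∀ v : V, ∃ w : V, φ (Sum.inr v) = Sum.inr w := by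
    by_contra h
    push_neg at h
    obtain ⟨a, ha⟩ := h
    obtain ⟨w, hw⟩ : ∃ w, φ (Sum.inr a) = Sum.inl w := by
      cases hx : φ (Sum.inr a) with
      | inl w => exact ⟨w, rfl⟩
      | inr w => exact absurd hx (ha w)
    -- get b, c distinct, both ≠ a
    obtain ⟨b, hb', c, hc', hbc⟩ : ∃ b ∈ ({a}ᶜ : Finset V), ∃ c ∈ ({a}ᶜ : Finset V), b ≠ c := by
      apply Finset.one_lt_card.mp
      have : (({a}ᶜ : Finset V)).card = Fintype.card V - 1 := by
        simp [Finset.card_compl]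
      omega
    rw [Finset.mem_compl, Finset.mem_singleton] at hb' hc'
    cases hb : φ (Sum.inr b) with
    | inr x =>
      have hxw : x = w := by
        have := hadj b a hb'
        rw [hb, hw, ext_adj_rl] at this
        exact this
      subst hxw
      cases hc : φ (Sum.inr c) with
      | inr y =>
        have hyw : y = x := by
          have := hadj c a hc'
          rw [hc, hw, ext_adj_rl] at this
          exact this
        subst hyw
        exact hbc (Sum.inr.inj (hinj (hb.trans hc.symm)))
      | inl y =>
        have hyw : x = y := by
          have := hadj b c hbc
          rw [hb, hc, ext_adj_rl] at this
          exact this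
        subst hyw
        exact hc' (Sum.inr.inj (hinj (hc.trans hw.symm)))
    | inl y =>
      cases hc : φ (Sum.inr c) with
      | inr x =>
        have hxw : x = w := by
          have := hadj c a hc'
          rw [hc, hw, ext_adj_rl] at this
          exact this
        subst hxw
        have hyw : x = y := by
          have := hadj c b hbc.symm
          rw [hb, hc, ext_adj_rl] at this
          exact this
        subst hyw
        exact hb' (Sum.inr.inj (hinj (hb.trans hw.symm)))
      | inl z =>
        -- hard case: all new vertices map to old ones, hence G = ⊤
        have hyz : y ≠ z := by
          intro e
          refine hbc (Sum.inr.inj (hinj ?_))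
          rw [hb, hc, e]
        have hall : ∀ d : V, ∃ u : V, φ (Sum.inr d) = Sum.inl u := by
          intro d
          cases hd : φ (Sum.inr d) with
          | inl u => exact ⟨u, rfl⟩
          | inr x =>
            have hdb : d ≠ b := fun e => by rw [e, hb] at hd; exact Sum.inl_ne_inr hd
            have hdc : d ≠ c := fun e => by rw [e, hc] at hd; exact Sum.inl_ne_inr hd
            have h1 : x = y := by
              have := hadj d b hdb
              rw [hd, hb, ext_adj_rl] at this
              exact this
            have h2 : x = z := by
              have := hadj d c hdc
              rw [hd, hc, ext_adj_rl] at this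
              exact this
            exact absurd (h1 ▸ h2) hyz
        choose f hf using hall
        have hfinj : Function.Injective f := by
          intro d e hde
          have : φ (Sum.inr d) = φ (Sum.inr e) := by rw [hf, hf, hde]
          exact Sum.inr.inj (hinj this)
        have hfsurj : Function.Surjective f := Finite.surjective_of_injective hfinj
        apply hnc
        ext u u'
        simp only [SimpleGraph.top_adj]
        constructor
        · exact fun h => G.ne_of_adj h
        · intro huu
          obtain ⟨d, rfl⟩ := hfsurj u
          obtain ⟨e, rfl⟩ := hfsurj u'
          have hde : d ≠ e := fun h => huu (by rw [h])
          have := hadj d e hde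
          rw [hf, hf, ext_adj_ll] at this
          exact this
  refine ⟨key, ?_⟩
  choose g hg using key
  have hginj : Function.Injective g := by
    intro d e hde
    have : φ (Sum.inr d) = φ (Sum.inr e) := by rw [hg, hg, hde]
    exact Sum.inr.inj (hinj this)
  have hgsurj : Function.Surjective g := Finite.surjective_of_injective hginj
  intro v
  cases hv : φ (Sum.inl v) with
  | inl w => exact ⟨w, rfl⟩
  | inr w =>
    obtain ⟨b, rfl⟩ := hgsurj w
    have : φ (Sum.inr b) = φ (Sum.inl v) := by rw [hg, hv]
    exact (Sum.inr_ne_inl (hinj this)).elim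
end

section
/- Let G be a non-complete finite simple graph, and let G' be the graph obtained from G by adding a disjoint clique with the same number of vertices and a perfect matching between the two parts. Then the automorphism group of G' is isomorphic to the automorphism group of G. -/
open SimpleGraph

set_option linter.unusedSectionVars false
set_option linter.unusedVariables false

section aux
variable {V : Type*} [Fintype V] (G : SimpleGraph V)

lemma ext_adj_inl_inl {a b : V} : (ext G).Adj (Sum.inl a) (Sum.inl b) ↔ G.Adj a b := Iff.rfl
lemma ext_adj_inr_inr {a b : V} : (ext G).Adj (Sum.inr a) (Sum.inr b) ↔ a ≠ b := Iff.rfl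
lemma ext_adj_inl_inr {a b : V} : (ext G).Adj (Sum.inl a) (Sum.inr b) ↔ a = b := Iff.rfl
lemma ext_adj_inr_inl {a b : V} : (ext G).Adj (Sum.inr a) (Sum.inl b) ↔ a = b := Iff.rfl

lemma dom_of (φ : ext G ≃g ext G) {v x : V} (h : φ (Sum.inr v) = Sum.inl x) :
    ∀ y, y ≠ x → G.Adj x y := by
  classical
  set g : V → V ⊕ V := fun b => if b = v then Sum.inl v else Sum.inr b with hg
  have hginj : Function.Injective g := by
    intro b c hbc
    by_cases hb : b = v <;> by_cases hc : c = v
    · rw [hb, hc]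
    · simp [hg, hb, hc] at hbc
    · simp [hg, hb, hc] at hbc
    · simpa [hg, hb, hc] using hbc
  have hmem : ∀ b, φ (g b) ∈ (ext G).neighborFinset (Sum.inl x) := by
    intro b
    rw [SimpleGraph.mem_neighborFinset, ← h]
    apply φ.map_rel_iff.2
    rcases eq_or_ne b v with hb | hb
    · subst hb
      simp only [hg, if_pos rfl]
      exact (ext_adj_inr_inl G).2 rfl
    · simp only [hg, if_neg hb]
      exact (ext_adj_inr_inr G).2 (Ne.symm hb)
  have h1 : Fintype.card V ≤ ((ext G).neighborFinset (Sum.inl x)).card := by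
    rw [← Finset.card_univ]
    exact Finset.card_le_card_of_injOn (fun b => φ (g b)) (fun b _ => hmem b)
      ((φ.injective.comp hginj).injOn)
  have h2 : (ext G).neighborFinset (Sum.inl x) ⊆
      (G.neighborFinset x).image Sum.inl ∪ {Sum.inr x} := by
    intro z hz
    rw [SimpleGraph.mem_neighborFinset] at hz
    rcases z with c | c
    · exact Finset.mem_union_left _
        (Finset.mem_image_of_mem _ (by rw [SimpleGraph.mem_neighborFinset]; exact hz))
    · have : x = c := hz
      subst this
      exact Finset.mem_union_right _ (Finset.mem_singleton_self _)
  have h3 : ((ext G).neighborFinset (Sum.inl x)).card ≤ (G.neighborFinset x).card + 1 :=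
    le_trans (Finset.card_le_card h2)
      (le_trans (Finset.card_union_le _ _)
        (by rw [Finset.card_singleton]; exact Nat.add_le_add_right Finset.card_image_le 1))
  have h4 : G.neighborFinset x ⊆ Finset.univ.erase x := by
    intro y hy
    rw [SimpleGraph.mem_neighborFinset] at hy
    exact Finset.mem_erase.2 ⟨(G.ne_of_adj hy).symm, Finset.mem_univ _⟩
  have h5 : (Finset.univ.erase x).card ≤ (G.neighborFinset x).card := by
    rw [Finset.card_erase_of_mem (Finset.mem_univ x), Finset.card_univ]
    omega
  have h6 : G.neighborFinset x = Finset.univ.erase x :=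
    Finset.eq_of_subset_of_card_le h4 h5
  intro y hy
  have : y ∈ G.neighborFinset x := h6 ▸ Finset.mem_erase.2 ⟨hy, Finset.mem_univ _⟩
  rw [SimpleGraph.mem_neighborFinset] at this
  exact this


lemma inr_inr (hnc : G ≠ ⊤) (φ : ext G ≃g ext G) (v : V) :
    ∃ w, φ (Sum.inr v) = Sum.inr w := by
  classical
  rcases hφ : φ (Sum.inr v) with x | w
  swap
  · exact ⟨w, rfl⟩
  exfalso
  apply hnc
  have key : ∀ a b : V, a ≠ b → G.Adj a b := by
    set P : V → Prop := fun s => ∃ y, φ (Sum.inr s) = Sum.inl y with hP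
    set S := Finset.univ.filter P with hS
    set T := Finset.univ.filter (fun s => ¬ P s) with hT
    have hT1 : T.card ≤ 1 := by
      rw [Finset.card_le_one]
      intro w1 h1 w2 h2
      have hp1 : ∃ q, φ (Sum.inr w1) = Sum.inr q := by
        rcases hq : φ (Sum.inr w1) with q | q
        · exact absurd ⟨q, hq⟩ ((Finset.mem_filter.1 h1).2)
        · exact ⟨q, rfl⟩
      have hp2 : ∃ q, φ (Sum.inr w2) = Sum.inr q := by
        rcases hq : φ (Sum.inr w2) with q | q
        · exact absurd ⟨q, hq⟩ ((Finset.mem_filter.1 h2).2)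
        · exact ⟨q, rfl⟩
      obtain ⟨q1, hq1⟩ := hp1
      obtain ⟨q2, hq2⟩ := hp2
      have hw1v : w1 ≠ v := by
        rintro rfl
        rw [hφ] at hq1
        simp at hq1
      have hw2v : w2 ≠ v := by
        rintro rfl
        rw [hφ] at hq2
        simp at hq2
      have hx1 : x = q1 := by
        have hadj : (ext G).Adj (Sum.inr v) (Sum.inr w1) :=
          (ext_adj_inr_inr G).2 (Ne.symm hw1v)
        have h' := φ.map_rel_iff.2 hadj
        rw [hφ, hq1] at h'
        exact h'
      have hx2 : x = q2 := by
        have hadj : (ext G).Adj (Sum.inr v) (Sum.inr w2) :=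
          (ext_adj_inr_inr G).2 (Ne.symm hw2v)
        have h' := φ.map_rel_iff.2 hadj
        rw [hφ, hq2] at h'
        exact h'
      have : φ (Sum.inr w1) = φ (Sum.inr w2) := by rw [hq1, hq2, ← hx1, ← hx2]
      exact Sum.inr.inj (φ.injective this)
    set D := Finset.univ.filter (fun a => ∀ y, y ≠ a → G.Adj a y) with hD
    have hSD : S.card ≤ D.card := by
      apply Finset.card_le_card_of_injOn (fun s => (φ (Sum.inr s)).elim id id)
      · intro s hs
        obtain ⟨y, hy⟩ := (Finset.mem_filter.1 hs).2
        show (φ (Sum.inr s)).elim id id ∈ D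
        rw [hy]
        simp only [Sum.elim_inl, id]
        exact Finset.mem_filter.2 ⟨Finset.mem_univ _, fun z hz => dom_of G φ hy z hz⟩
      · intro s hs t ht hst
        obtain ⟨y, hy⟩ := (Finset.mem_filter.1 hs).2
        obtain ⟨z, hz⟩ := (Finset.mem_filter.1 ht).2
        simp only [hy, hz, Sum.elim_inl, id] at hst
        apply Sum.inr.inj (φ.injective ?_)
        rw [hy, hz, hst]
    have hST : S.card + T.card = Fintype.card V := by
      rw [hS, hT, ← Finset.card_univ]
      exact Finset.card_filter_add_card_filter_not (p := P)
    intro a b hab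
    by_cases ha : a ∈ D
    · exact (Finset.mem_filter.1 ha).2 b (Ne.symm hab)
    · by_cases hb : b ∈ D
      · exact ((Finset.mem_filter.1 hb).2 a hab).symm
      · exfalso
        have h2' : ({a, b} : Finset V) ⊆ Finset.univ \ D := by
          intro z hz
          rcases Finset.mem_insert.1 hz with rfl | hz
          · exact Finset.mem_sdiff.2 ⟨Finset.mem_univ _, ha⟩
          · rw [Finset.mem_singleton.1 hz]
            exact Finset.mem_sdiff.2 ⟨Finset.mem_univ _, hb⟩
        have hc2 : 2 ≤ (Finset.univ \ D).card := by
          calc 2 = ({a, b} : Finset V).card := (Finset.card_pair hab).symm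
            _ ≤ (Finset.univ \ D).card := Finset.card_le_card h2'
        have hDle : D.card ≤ Fintype.card V := by
          rw [← Finset.card_univ]; exact Finset.card_le_card (Finset.subset_univ _)
        have hcard : (Finset.univ \ D).card = Fintype.card V - D.card := by
          rw [Finset.card_sdiff_of_subset (Finset.subset_univ _), Finset.card_univ]
        omega
  ext a b
  simp only [SimpleGraph.top_adj]
  exact ⟨fun h => h.ne, fun h => key a b h⟩

lemma inl_inl (hnc : G ≠ ⊤) (φ : ext G ≃g ext G) (v : V) :
    ∃ w, φ (Sum.inl v) = Sum.inl w := by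
  classical
  rcases hφ : φ (Sum.inl v) with w | u
  · exact ⟨w, rfl⟩
  exfalso
  set σ : V → V := fun s => (φ (Sum.inr s)).elim id id with hσ
  have hspec : ∀ s, φ (Sum.inr s) = Sum.inr (σ s) := by
    intro s
    obtain ⟨w, hw⟩ := inr_inr G hnc φ s
    rw [hw, hσ]
    simp [hw]
  have hinj : Function.Injective σ := fun a b hab =>
    Sum.inr.inj (φ.injective (by rw [hspec, hspec, hab]))
  obtain ⟨w, hw⟩ := Finite.injective_iff_surjective.1 hinj u
  have : φ (Sum.inr w) = φ (Sum.inl v) := by rw [hspec, hw, hφ]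
  exact nomatch (φ.injective this)

def pmap (φ : ext G ≃g ext G) (v : V) : V := (φ (Sum.inl v)).elim id id

lemma pmap_spec (hnc : G ≠ ⊤) (φ : ext G ≃g ext G) (v : V) :
    φ (Sum.inl v) = Sum.inl (pmap G φ v) := by
  obtain ⟨w, hw⟩ := inl_inl G hnc φ v
  simp [pmap, hw]

def Fiso (hnc : G ≠ ⊤) (φ : ext G ≃g ext G) : G ≃g G where
  toEquiv :=
    { toFun := pmap G φ
      invFun := pmap G φ.symm
      left_inv := by
        intro v
        have h2 := pmap_spec G hnc φ.symm (pmap G φ v)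
        rw [← pmap_spec G hnc φ v, φ.symm_apply_apply] at h2
        exact (Sum.inl.inj h2).symm
      right_inv := by
        intro v
        have h2 := pmap_spec G hnc φ (pmap G φ.symm v)
        rw [← pmap_spec G hnc φ.symm v, φ.apply_symm_apply] at h2
        exact (Sum.inl.inj h2).symm }
  map_rel_iff' := by
    intro a b
    show G.Adj (pmap G φ a) (pmap G φ b) ↔ G.Adj a b
    rw [← ext_adj_inl_inl G, ← pmap_spec G hnc φ a, ← pmap_spec G hnc φ b]
    exact φ.map_rel_iff

def Eiso (e : G ≃g G) : ext G ≃g ext G where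
  toEquiv := Equiv.sumCongr e.toEquiv e.toEquiv
  map_rel_iff' := by
    rintro (a | a) (b | b)
    · exact e.map_rel_iff
    · exact e.toEquiv.apply_eq_iff_eq
    · exact e.toEquiv.apply_eq_iff_eq
    · exact e.toEquiv.injective.ne_iff

end aux

theorem stmt3 {V : Type*} [Fintype V] (G : SimpleGraph V)
    (hn : 1 ≤ Fintype.card V) (hnc : G ≠ ⊤) :
    Nonempty ((ext G ≃g ext G) ≃* (G ≃g G)) := by
  classical
  refine ⟨{ toFun := Fiso G hnc, invFun := Eiso G,
            left_inv := ?_, right_inv := ?_, map_mul' := ?_ }⟩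
  · intro φ
    apply DFunLike.ext
    rintro (v | v)
    · exact (pmap_spec G hnc φ v).symm
    · show Sum.inr (pmap G φ v) = φ (Sum.inr v)
      obtain ⟨w, hw⟩ := inr_inr G hnc φ v
      have hadj : (ext G).Adj (Sum.inl v) (Sum.inr v) := (ext_adj_inl_inr G).2 rfl
      have h' := φ.map_rel_iff.2 hadj
      rw [pmap_spec G hnc φ v, hw] at h'
      rw [hw]
      exact congrArg Sum.inr h'
  · intro e
    apply DFunLike.ext
    intro v
    rfl
  · intro φ ψ
    apply DFunLike.ext
    intro v
    have h : (Sum.inl (pmap G (φ * ψ) v) : V ⊕ V) = Sum.inl (pmap G φ (pmap G ψ v)) := by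
      rw [← pmap_spec G hnc (φ * ψ) v, ← pmap_spec G hnc φ (pmap G ψ v),
        ← pmap_spec G hnc ψ v]
      rfl
    exact Sum.inl.inj h
end

section
/- Let G be a non-complete finite simple graph, with G' as in the matching-plus-clique construction. Then the restriction map sending an automorphism of G' to its restriction on the original vertex set V is a well-defined injective group homomorphism Aut(G') → Aut(G). -/
open SimpleGraph

lemma ext_clique_inr {V : Type*} [Fintype V] (G : SimpleGraph V)
    (hn : 3 ≤ Fintype.card V) (hnc : G ≠ ⊤)
    (S : Finset (V ⊕ V)) (hS : (ext G).IsNClique (Fintype.card V) S) :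
    ∀ x ∈ S, ∃ w, x = Sum.inr w := by
  classical
  by_contra h
  push_neg at h
  obtain ⟨x, hxS, hx⟩ := h
  obtain a | a := x
  swap
  · exact hx a rfl
  clear hx
  set A : Finset V := Finset.univ.filter (fun v => Sum.inl v ∈ S) with hAdef
  set B : Finset V := Finset.univ.filter (fun v => Sum.inr v ∈ S) with hBdef
  have hBa : B ⊆ {a} := by
    intro b hb
    have hbS : Sum.inr b ∈ S := (Finset.mem_filter.mp hb).2
    have hne : (Sum.inr b : V ⊕ V) ≠ Sum.inl a := by simp
    have hadj := hS.1 (Finset.mem_coe.mpr hbS) (Finset.mem_coe.mpr hxS) hne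
    have : b = a := hadj
    simp [this]
  have hSsplit : S = A.image Sum.inl ∪ B.image Sum.inr := by
    ext y
    obtain v | v := y <;> simp [hAdef, hBdef]
  have hdisj : Disjoint (A.image Sum.inl) (B.image Sum.inr) := by
    rw [Finset.disjoint_left]
    intro y hy1 hy2
    simp only [Finset.mem_image] at hy1 hy2
    obtain ⟨u, _, hu⟩ := hy1
    obtain ⟨w, _, hw⟩ := hy2
    rw [← hu] at hw
    exact Sum.inl_ne_inr hw.symm
  have hcard : A.card + B.card = Fintype.card V := by
    have := hS.2
    rw [hSsplit, Finset.card_union_of_disjoint hdisj,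
      Finset.card_image_of_injective _ Sum.inl_injective,
      Finset.card_image_of_injective _ Sum.inr_injective] at this
    exact this
  have hAclique : ∀ u ∈ A, ∀ v ∈ A, u ≠ v → G.Adj u v := by
    intro u hu v hv huv
    have hu' : Sum.inl u ∈ S := (Finset.mem_filter.mp hu).2
    have hv' : Sum.inl v ∈ S := (Finset.mem_filter.mp hv).2
    have hne : (Sum.inl u : V ⊕ V) ≠ Sum.inl v := by simp [huv]
    exact hS.1 (Finset.mem_coe.mpr hu') (Finset.mem_coe.mpr hv') hne
  rcases Finset.subset_singleton_iff.mp hBa with hB | hB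
  · -- B empty : A is an n-clique in G, so G = ⊤
    have hAcard : A.card = Fintype.card V := by
      rw [hB] at hcard; simpa using hcard
    have hAuniv : A = Finset.univ := Finset.eq_univ_of_card _ hAcard
    apply hnc
    ext u v
    simp only [top_adj]
    constructor
    · exact G.ne_of_adj
    · intro huv
      exact hAclique u (hAuniv ▸ Finset.mem_univ u) v (hAuniv ▸ Finset.mem_univ v) huv
  · -- B = {a} : inr a ∈ S, adjacent to ≥ 2 distinct inl vertices, impossible
    have haS : Sum.inr a ∈ S := by
      have : a ∈ B := hB ▸ Finset.mem_singleton_self a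
      exact (Finset.mem_filter.mp this).2
    have hBcard : B.card = 1 := by rw [hB]; simp
    have h2 : 1 < A.card := by omega
    obtain ⟨u, hu, v, hv, huv⟩ := Finset.one_lt_card.mp h2
    have key : ∀ w ∈ A, a = w := by
      intro w hw
      have hwS : Sum.inl w ∈ S := (Finset.mem_filter.mp hw).2
      have hne : (Sum.inr a : V ⊕ V) ≠ Sum.inl w := by simp
      exact hS.1 (Finset.mem_coe.mpr haS) (Finset.mem_coe.mpr hwS) hne
    exact huv ((key u hu).symm.trans (key v hv))

lemma ext_inr_to_inr {V : Type*} [Fintype V] (G : SimpleGraph V)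
    (hn : 3 ≤ Fintype.card V) (hnc : G ≠ ⊤)
    (φ : ext G ≃g ext G) (v : V) : ∃ w, φ (Sum.inr v) = Sum.inr w := by
  classical
  set S : Finset (V ⊕ V) := (Finset.univ.image Sum.inr).image φ with hSdef
  have hS : (ext G).IsNClique (Fintype.card V) S := by
    constructor
    · intro x hx y hy hxy
      simp only [hSdef, Finset.coe_image, Set.mem_image, Finset.mem_coe,
        Finset.mem_image] at hx hy
      obtain ⟨x', ⟨u, _, rfl⟩, rfl⟩ := hx
      obtain ⟨y', ⟨w, _, rfl⟩, rfl⟩ := hy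
      have huw : u ≠ w := fun h => hxy (by rw [h])
      have : (ext G).Adj (Sum.inr u) (Sum.inr w) := huw
      exact φ.map_adj_iff.mpr this
    · rw [hSdef, Finset.card_image_of_injective _ φ.injective,
        Finset.card_image_of_injective _ Sum.inr_injective, Finset.card_univ]
  have hmem : φ (Sum.inr v) ∈ S := by
    simp only [hSdef, Finset.mem_image]
    exact ⟨Sum.inr v, ⟨v, Finset.mem_univ v, rfl⟩, rfl⟩
  obtain ⟨w, hw⟩ := ext_clique_inr G hn hnc S hS _ hmem
  exact ⟨w, hw⟩

lemma ext_inl_to_inl {V : Type*} [Fintype V] (G : SimpleGraph V)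
    (hn : 3 ≤ Fintype.card V) (hnc : G ≠ ⊤)
    (φ : ext G ≃g ext G) (v : V) : ∃ w, φ (Sum.inl v) = Sum.inl w := by
  cases h : φ (Sum.inl v) with
  | inl w => exact ⟨w, rfl⟩
  | inr w =>
    obtain ⟨u, hu⟩ := ext_inr_to_inr G hn hnc φ.symm w
    have : φ.symm (φ (Sum.inl v)) = Sum.inr u := by rw [h]; exact hu
    rw [φ.symm_apply_apply] at this
    exact absurd this (by simp)

/-- The restriction of an automorphism of `ext G` to the old vertices. -/
def extRes {V : Type*} (G : SimpleGraph V) (φ : ext G ≃g ext G) (v : V) : V :=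
  (φ (Sum.inl v)).elim id id

lemma extRes_spec {V : Type*} [Fintype V] (G : SimpleGraph V)
    (hn : 3 ≤ Fintype.card V) (hnc : G ≠ ⊤)
    (φ : ext G ≃g ext G) (v : V) :
    (Sum.inl (extRes G φ v) : V ⊕ V) = φ (Sum.inl v) := by
  obtain ⟨w, hw⟩ := ext_inl_to_inl G hn hnc φ v
  rw [extRes, hw]
  rfl

theorem stmt4 {V : Type*} [Fintype V] (G : SimpleGraph V)
    (hn : 3 ≤ Fintype.card V) (hnc : G ≠ ⊤) :
    ∃ f : (ext G ≃g ext G) →* (G ≃g G),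
      Function.Injective f ∧
      ∀ (φ : ext G ≃g ext G) (v : V), (Sum.inl ((f φ) v) : V ⊕ V) = φ (Sum.inl v) := by
  classical
  have spec := extRes_spec G hn hnc
  -- the restriction as an equivalence
  have linv : ∀ (φ : ext G ≃g ext G) (v : V),
      extRes G φ.symm (extRes G φ v) = v := by
    intro φ v
    apply Sum.inl_injective
    rw [spec φ.symm, spec φ, φ.symm_apply_apply]
  let E : (ext G ≃g ext G) → (V ≃ V) := fun φ =>
    ⟨extRes G φ, extRes G φ.symm, linv φ, fun v => by
      have := linv φ.symm v
      simpa using this⟩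
  have Eadj : ∀ (φ : ext G ≃g ext G) (u v : V),
      G.Adj (extRes G φ u) (extRes G φ v) ↔ G.Adj u v := by
    intro φ u v
    have h1 : G.Adj (extRes G φ u) (extRes G φ v) ↔
        (ext G).Adj (Sum.inl (extRes G φ u)) (Sum.inl (extRes G φ v)) := Iff.rfl
    rw [h1, spec φ u, spec φ v, φ.map_adj_iff]
    rfl
  let F : (ext G ≃g ext G) → (G ≃g G) := fun φ => ⟨E φ, Eadj φ _ _⟩
  have Fspec : ∀ (φ : ext G ≃g ext G) (v : V),
      (Sum.inl (F φ v) : V ⊕ V) = φ (Sum.inl v) := fun φ v => spec φ v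
  refine ⟨⟨⟨F, ?_⟩, ?_⟩, ?_, Fspec⟩
  · -- map_one
    ext v
    apply Sum.inl_injective
    rw [Fspec]
    rfl
  · -- map_mul
    intro φ ψ
    ext v
    apply Sum.inl_injective
    have h1 : ((φ * ψ) : ext G ≃g ext G) (Sum.inl v) = φ (ψ (Sum.inl v)) := rfl
    have h2 : ((F φ * F ψ) : G ≃g G) v = F φ (F ψ v) := rfl
    rw [h2, Fspec (φ * ψ), h1, Fspec φ, Fspec ψ]
  · -- injectivity
    intro φ ψ h
    have hF : F φ = F ψ := h
    have key : ∀ (χ : ext G ≃g ext G) (v : V), χ (Sum.inr v) = Sum.inr ((F χ) v) := by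
      intro χ v
      obtain ⟨w, hw⟩ := ext_inr_to_inr G hn hnc χ v
      have hadj : (ext G).Adj (Sum.inl v) (Sum.inr v) := rfl
      have := χ.map_adj_iff.mpr hadj
      rw [hw, ← Fspec χ v] at this
      have hvw : (F χ) v = w := this
      rw [hw, hvw]
    ext x
    obtain v | v := x
    · have h1 := Fspec φ v
      have h2 := Fspec ψ v
      rw [← h1, ← h2, hF]
    · rw [key φ v, key ψ v, hF]
end

section
/- For every finite simple graph G and every natural number g, there exists a connected finite simple graph H with Aut(H) ≅ Aut(G) and chromatic number χ(H) ≥ g. -/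
open SimpleGraph

namespace F12

open scoped Classical

/-! ### Counting helpers -/

private lemma card_val (b : ℕ) (p : ℕ → Prop) [DecidablePred p] :
    Fintype.card {t : Fin b // p t.val} = ((Finset.range b).filter p).card := by
  rw [Fintype.card_subtype]
  refine Finset.card_bij (fun a _ => a.val) ?_ ?_ ?_
  · intro a ha
    simp only [Finset.mem_filter, Finset.mem_univ, true_and] at ha
    simp [Finset.mem_filter, Finset.mem_range, a.isLt, ha]
  · intro a₁ _ a₂ _ h
    exact Fin.val_injective h
  · intro m hm
    simp only [Finset.mem_filter, Finset.mem_range] at hm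
    exact ⟨⟨m, hm.1⟩, by simp [hm.2], rfl⟩

private lemma count_ge (b a : ℕ) : Fintype.card {t : Fin b // a ≤ t.val} = b - a := by
  rw [card_val b (fun m => a ≤ m)]
  have h : (Finset.range b).filter (fun m => a ≤ m) = Finset.Ico a b := by
    ext m
    simp only [Finset.mem_filter, Finset.mem_range, Finset.mem_Ico]
    omega
  rw [h, Nat.card_Ico]

private lemma count_le (b a : ℕ) (h : a < b) :
    Fintype.card {t : Fin b // t.val ≤ a} = a + 1 := by
  rw [card_val b (fun m => m ≤ a)]
  have h2 : (Finset.range b).filter (fun m => m ≤ a) = Finset.range (a + 1) := by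
    ext m
    simp only [Finset.mem_filter, Finset.mem_range]
    omega
  rw [h2, Finset.card_range]

private lemma count_true (b : ℕ) : Fintype.card {t : Fin b // True} = b := by
  rw [card_val b (fun _ => True)]
  rw [Finset.filter_true_of_mem (fun _ _ => trivial), Finset.card_range]

private lemma count_ne (b : ℕ) (t : Fin b) :
    Fintype.card {t' : Fin b // t ≠ t'} = b - 1 := by
  rw [Fintype.card_subtype, Finset.filter_ne,
    Finset.card_erase_of_mem (Finset.mem_univ t), Finset.card_univ, Fintype.card_fin]

private lemma count_window (b k : ℕ) (h : 2 * k + 1 < b) :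
    Fintype.card {j : Fin b // j.val % 2 = 1 ∧ 3 ≤ j.val ∧ j.val ≤ 2 * k + 1} = k := by
  rw [card_val b (fun m => m % 2 = 1 ∧ 3 ≤ m ∧ m ≤ 2 * k + 1)]
  have key : ((Finset.range b).filter (fun m => m % 2 = 1 ∧ 3 ≤ m ∧ m ≤ 2 * k + 1)).card
      = (Finset.range k).card := by
    refine Finset.card_nbij' (fun m => (m - 3) / 2) (fun i => 2 * i + 3) ?_ ?_ ?_ ?_
    · intro m hm
      dsimp only
      simp only [Finset.mem_coe, Finset.mem_filter, Finset.mem_range] at hm ⊢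
      omega
    · intro i hi
      dsimp only
      simp only [Finset.mem_coe, Finset.mem_filter, Finset.mem_range] at hi ⊢
      omega
    · intro m hm
      dsimp only
      simp only [Finset.mem_coe, Finset.mem_filter, Finset.mem_range] at hm
      omega
    · intro i hi
      dsimp only
      simp only [Finset.mem_coe, Finset.mem_range] at hi
      omega
  rw [key, Finset.card_range]

private lemma count_false (b : ℕ) : Fintype.card {t : Fin b // False} = 0 := by
  have : IsEmpty {t : Fin b // False} := ⟨fun x => x.2⟩
  exact Fintype.card_eq_zero

/-- Degrees are preserved by graph isomorphisms. -/
private lemma iso_degree {A : Type} [Fintype A] {Q : SimpleGraph A} (f : Q ≃g Q) (x : A) :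
    Q.degree (f x) = Q.degree x := by
  rw [← SimpleGraph.card_neighborSet_eq_degree, ← SimpleGraph.card_neighborSet_eq_degree]
  exact Fintype.card_congr (f.mapNeighborSet x).symm

/-! ### The construction -/

variable {V : Type} [Fintype V]

/-- The window condition: vertex `v` of `G` (of degree `d` in a graph with `n` vertices)
is connected to spine vertex `j` iff `j` is odd and `3 ≤ j ≤ 2*(n-d)+1`. -/
def wcond (n d j : ℕ) : Prop := j % 2 = 1 ∧ 3 ≤ j ∧ j ≤ 2 * (n - d) + 1

/-- The big graph: `G` on `V`, a clique `C = Fin P`, a spine `S = Fin P` attached to the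
clique by a staircase, all edges between `V` and `C`, and window edges between `V` and `S`. -/
noncomputable def big (G : SimpleGraph V) (P : ℕ) :
    SimpleGraph (V ⊕ (Fin P ⊕ Fin P)) where
  Adj x y :=
    match x, y with
    | Sum.inl u, Sum.inl v => G.Adj u v
    | Sum.inl _, Sum.inr (Sum.inl _) => True
    | Sum.inl u, Sum.inr (Sum.inr j) => wcond (Fintype.card V) (G.degree u) j.val
    | Sum.inr (Sum.inl _), Sum.inl _ => True
    | Sum.inr (Sum.inl t), Sum.inr (Sum.inl t') => t ≠ t'
    | Sum.inr (Sum.inl t), Sum.inr (Sum.inr j) => j.val ≤ t.val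
    | Sum.inr (Sum.inr j), Sum.inl v => wcond (Fintype.card V) (G.degree v) j.val
    | Sum.inr (Sum.inr j), Sum.inr (Sum.inl t) => j.val ≤ t.val
    | Sum.inr (Sum.inr _), Sum.inr (Sum.inr _) => False
  symm := by
    constructor
    rintro (u | t | j) (v | t' | j') h <;>
      first
      | exact h
      | exact h.symm
      | exact Ne.symm h
      | trivial
      | exact h.elim
  loopless := by
    constructor
    rintro (u | t | j) h
    · exact G.loopless.irrefl u h
    · exact h rfl
    · exact h

variable (G : SimpleGraph V) {P : ℕ}

lemma adj_ll {u v : V} : (big G P).Adj (.inl u) (.inl v) ↔ G.Adj u v := Iff.rfl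

lemma adj_lc {u : V} {t : Fin P} : (big G P).Adj (.inl u) (.inr (.inl t)) := trivial

lemma adj_ls {u : V} {j : Fin P} :
    (big G P).Adj (.inl u) (.inr (.inr j)) ↔ wcond (Fintype.card V) (G.degree u) j.val :=
  Iff.rfl

lemma adj_cc {t t' : Fin P} :
    (big G P).Adj (.inr (.inl t)) (.inr (.inl t')) ↔ t ≠ t' := Iff.rfl

lemma adj_cs {t j : Fin P} :
    (big G P).Adj (.inr (.inl t)) (.inr (.inr j)) ↔ j.val ≤ t.val := Iff.rfl

lemma adj_sl {v : V} {j : Fin P} :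
    (big G P).Adj (.inr (.inr j)) (.inl v) ↔ wcond (Fintype.card V) (G.degree v) j.val :=
  Iff.rfl

lemma adj_ss {j j' : Fin P} : ¬ (big G P).Adj (.inr (.inr j)) (.inr (.inr j')) := fun h => h

/-! ### Degree computations -/

private lemma deg_split (H : SimpleGraph (V ⊕ (Fin P ⊕ Fin P))) (x : V ⊕ (Fin P ⊕ Fin P)) :
    H.degree x = Fintype.card {v : V // H.Adj x (.inl v)}
      + (Fintype.card {t : Fin P // H.Adj x (.inr (.inl t))}
        + Fintype.card {j : Fin P // H.Adj x (.inr (.inr j))}) := by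
  rw [← SimpleGraph.card_neighborSet_eq_degree]
  have e1 : H.neighborSet x ≃
      {v : V // H.Adj x (.inl v)} ⊕
        ({t : Fin P // H.Adj x (.inr (.inl t))} ⊕ {j : Fin P // H.Adj x (.inr (.inr j))}) :=
    Equiv.subtypeSum.trans (Equiv.sumCongr (Equiv.refl _) Equiv.subtypeSum)
  rw [Fintype.card_congr e1, Fintype.card_sum, Fintype.card_sum]

/-- The (unknown) number of vertices of `G` attached to spine vertex `j`. -/
noncomputable def cW (j : ℕ) : ℕ :=
  Fintype.card {v : V // wcond (Fintype.card V) (G.degree v) j}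

lemma deg_inl (hP : 2 * Fintype.card V + 2 ≤ P) (v : V) :
    (big G P).degree (.inl v) = P + Fintype.card V := by
  have hd : G.degree v < Fintype.card V := G.degree_lt_card_verts v
  rw [deg_split]
  have h1 : Fintype.card {u : V // (big G P).Adj (.inl v) (.inl u)} = G.degree v := by
    rw [← SimpleGraph.card_neighborSet_eq_degree]
    exact Fintype.card_congr (Equiv.subtypeEquivRight (fun u => Iff.rfl))
  have h2 : Fintype.card {t : Fin P // (big G P).Adj (.inl v) (.inr (.inl t))} = P := by
    exact (Fintype.card_congr (Equiv.subtypeUnivEquiv (fun t => adj_lc G))).trans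
      (Fintype.card_fin P)
  have h3 : Fintype.card {j : Fin P // (big G P).Adj (.inl v) (.inr (.inr j))}
      = Fintype.card V - G.degree v := by
    exact (Fintype.card_congr (Equiv.subtypeEquivRight
      (p := fun j : Fin P => (big G P).Adj (.inl v) (.inr (.inr j)))
      (q := fun j : Fin P => j.val % 2 = 1 ∧ 3 ≤ j.val ∧
        j.val ≤ 2 * (Fintype.card V - G.degree v) + 1) (fun j => Iff.rfl))).trans
      (count_window P _ (by omega))
  rw [h1, h2, h3]
  omega

lemma deg_C (t : Fin P) :
    (big G P).degree (.inr (.inl t)) = P + Fintype.card V + t.val := by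
  have hP0 : 0 < P := t.pos
  rw [deg_split]
  have h1 : Fintype.card {v : V // (big G P).Adj (.inr (.inl t)) (.inl v)}
      = Fintype.card V := by
    exact Fintype.card_congr (Equiv.subtypeUnivEquiv (fun v => trivial))
  have h2 : Fintype.card {t' : Fin P // (big G P).Adj (.inr (.inl t)) (.inr (.inl t'))}
      = P - 1 :=
    (Fintype.card_congr (Equiv.subtypeEquivRight
      (p := fun t' : Fin P => (big G P).Adj (.inr (.inl t)) (.inr (.inl t')))
      (q := fun t' : Fin P => t ≠ t') (fun t' => Iff.rfl))).trans (count_ne P t)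
  have h3 : Fintype.card {j : Fin P // (big G P).Adj (.inr (.inl t)) (.inr (.inr j))}
      = t.val + 1 :=
    (Fintype.card_congr (Equiv.subtypeEquivRight
      (p := fun j : Fin P => (big G P).Adj (.inr (.inl t)) (.inr (.inr j)))
      (q := fun j : Fin P => j.val ≤ t.val) (fun j => Iff.rfl))).trans
      (count_le P t.val t.isLt)
  rw [h1, h2, h3]
  omega

lemma deg_S (j : Fin P) :
    (big G P).degree (.inr (.inr j)) = cW G j.val + (P - j.val) := by
  rw [deg_split]
  have h1 : Fintype.card {v : V // (big G P).Adj (.inr (.inr j)) (.inl v)} = cW G j.val := by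
    simp only [cW]
    exact Fintype.card_congr (Equiv.subtypeEquivRight
      (p := fun v : V => (big G P).Adj (.inr (.inr j)) (.inl v))
      (q := fun v => wcond (Fintype.card V) (G.degree v) j.val) (fun v => Iff.rfl))
  have h2 : Fintype.card {t : Fin P // (big G P).Adj (.inr (.inr j)) (.inr (.inl t))}
      = P - j.val :=
    (Fintype.card_congr (Equiv.subtypeEquivRight
      (p := fun t : Fin P => (big G P).Adj (.inr (.inr j)) (.inr (.inl t)))
      (q := fun t : Fin P => j.val ≤ t.val) (fun t => Iff.rfl))).trans (count_ge P j.val)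
  have h3 : Fintype.card {j' : Fin P // (big G P).Adj (.inr (.inr j)) (.inr (.inr j'))}
      = 0 :=
    (Fintype.card_congr (Equiv.subtypeEquivRight
      (p := fun j' : Fin P => (big G P).Adj (.inr (.inr j)) (.inr (.inr j')))
      (q := fun _ : Fin P => False) (fun j' => Iff.rfl))).trans (count_false P)
  rw [h1, h2, h3]
  omega

lemma cW_le (j : ℕ) : cW G j ≤ Fintype.card V := Fintype.card_subtype_le _

lemma cW_lo {j : ℕ} (h : cW G j ≠ 0) : 3 ≤ j := by
  have : 0 < cW G j := Nat.pos_of_ne_zero h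
  rw [cW, Fintype.card_pos_iff] at this
  obtain ⟨⟨v, hv⟩⟩ := this
  exact hv.2.1

lemma deg_S_lt [Nonempty V] (j : Fin P) :
    (big G P).degree (.inr (.inr j)) < P + Fintype.card V := by
  have hn : 0 < Fintype.card V := Fintype.card_pos
  have hj : j.val < P := j.isLt
  rw [deg_S]
  rcases eq_or_ne (cW G j.val) 0 with h | h
  · omega
  · have h3 : 3 ≤ j.val := cW_lo G h
    have hle : cW G j.val ≤ Fintype.card V := cW_le G _
    omega

lemma deg_S_small (j : Fin P) (h : j.val < 3) :
    (big G P).degree (.inr (.inr j)) = P - j.val := by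
  rw [deg_S]
  have : cW G j.val = 0 := by
    by_contra hc
    exact absurd (cW_lo G hc) (by omega)
  omega

/-! ### Every automorphism fixes the gadget pointwise -/

section Fix

variable [Nonempty V]

lemma fix_C (hP : 2 * Fintype.card V + 2 ≤ P) (f : big G P ≃g big G P)
    (t : Fin P) (ht : t.val ≠ 0) : f (.inr (.inl t)) = .inr (.inl t) := by
  have hdeg := iso_degree f (.inr (.inl t))
  rw [deg_C] at hdeg
  rcases hy : f (.inr (.inl t)) with v | t' | j
  · rw [hy, deg_inl G hP] at hdeg
    omega
  · rw [hy, deg_C] at hdeg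
    have : t' = t := Fin.ext (by omega)
    rw [this]
  · rw [hy] at hdeg
    have := deg_S_lt G j
    omega

lemma fix_S (hP : 2 * Fintype.card V + 2 ≤ P) (f : big G P ≃g big G P)
    (j : Fin P) : f (.inr (.inr j)) = .inr (.inr j) := by
  have hdeg := iso_degree f (.inr (.inr j))
  have hlt := deg_S_lt G j
  rcases hy : f (.inr (.inr j)) with v | t' | k
  · rw [hy, deg_inl G hP] at hdeg
    omega
  · rw [hy, deg_C] at hdeg
    omega
  · rw [hy] at hdeg
    by_cases hjk : k = j
    · rw [hjk]
    · exfalso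
      have hvne : k.val ≠ j.val := fun h => hjk (Fin.ext h)
      -- adjacency with fixed clique vertices
      have key : ∀ m : Fin P, m.val ≠ 0 → (j.val ≤ m.val ↔ k.val ≤ m.val) := by
        intro m hm
        have h1 : (big G P).Adj (.inr (.inr j)) (.inr (.inl m)) ↔
            (big G P).Adj (f (.inr (.inr j))) (f (.inr (.inl m))) := f.map_adj_iff.symm
        rw [hy, fix_C G hP f m hm] at h1
        exact h1
      rcases Nat.lt_or_ge j.val k.val with hlt2 | hge
      · -- j < k
        rcases Nat.lt_or_ge k.val 2 with hk2 | hk2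
        · -- k = 1, j = 0
          have hj0 : j.val = 0 := by omega
          have hk1 : k.val = 1 := by omega
          rw [deg_S_small G j (by omega), deg_S_small G k (by omega)] at hdeg
          have : 0 < P := j.pos
          omega
        · -- use m = k - 1
          have hmlt : k.val - 1 < P := by have := k.isLt; omega
          have := key ⟨k.val - 1, hmlt⟩ (by simp; omega)
          simp only [Fin.val_mk] at this
          omega
      · have hlt2 : k.val < j.val := by omega
        rcases Nat.lt_or_ge j.val 2 with hj2 | hj2
        · have hk0 : k.val = 0 := by omega
          have hj1 : j.val = 1 := by omega
          rw [deg_S_small G j (by omega), deg_S_small G k (by omega)] at hdeg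
          have : 0 < P := j.pos
          omega
        · have hmlt : j.val - 1 < P := by have := j.isLt; omega
          have := key ⟨j.val - 1, hmlt⟩ (by simp; omega)
          simp only [Fin.val_mk] at this
          omega

lemma fix_C0 (hP : 2 * Fintype.card V + 2 ≤ P) (f : big G P ≃g big G P)
    (t : Fin P) (ht : t.val = 0) : f (.inr (.inl t)) = .inr (.inl t) := by
  have hP0 : 0 < P := t.pos
  have hdeg := iso_degree f (.inr (.inl t))
  rw [deg_C] at hdeg
  rcases hy : f (.inr (.inl t)) with v | t' | j
  · exfalso
    -- C_t is adjacent to S_0, but no vertex of V is adjacent to S_0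
    set s0 : Fin P := ⟨0, hP0⟩ with hs0
    have hadj : (big G P).Adj (.inr (.inl t)) (.inr (.inr s0)) := by
      rw [adj_cs]
      simp [hs0]
    have h2 : (big G P).Adj (f (.inr (.inl t))) (f (.inr (.inr s0))) := f.map_adj_iff.mpr hadj
    rw [hy, fix_S G hP f s0] at h2
    rw [adj_ls] at h2
    obtain ⟨hodd, -, -⟩ := h2
    simp [hs0] at hodd
  · rw [hy, deg_C] at hdeg
    have : t' = t := Fin.ext (by omega)
    rw [this]
  · rw [hy] at hdeg
    have := deg_S_lt G j
    omega

lemma fix_C' (hP : 2 * Fintype.card V + 2 ≤ P) (f : big G P ≃g big G P)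
    (t : Fin P) : f (.inr (.inl t)) = .inr (.inl t) := by
  rcases eq_or_ne t.val 0 with h | h
  · exact fix_C0 G hP f t h
  · exact fix_C G hP f t h

lemma fix_V (hP : 2 * Fintype.card V + 2 ≤ P) (f : big G P ≃g big G P)
    (v : V) : ∃ w : V, f (.inl v) = .inl w := by
  have hdeg := iso_degree f (.inl v)
  rw [deg_inl G hP] at hdeg
  rcases hy : f (.inl v) with w | t | j
  · exact ⟨w, rfl⟩
  · exfalso
    have := hy.trans (fix_C' G hP f t).symm
    have := f.toEquiv.injective this
    simp at this
  · exfalso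
    rw [hy] at hdeg
    have := deg_S_lt G j
    omega

end Fix

/-! ### The automorphism group isomorphism -/

section AutEquiv

variable [Nonempty V]

noncomputable def resFun (hP : 2 * Fintype.card V + 2 ≤ P) (f : big G P ≃g big G P) (v : V) : V :=
  (fix_V G hP f v).choose

lemma resFun_spec (hP : 2 * Fintype.card V + 2 ≤ P) (f : big G P ≃g big G P) (v : V) :
    f (.inl v) = .inl (resFun G hP f v) :=
  (fix_V G hP f v).choose_spec

lemma resFun_inj (hP : 2 * Fintype.card V + 2 ≤ P) (f : big G P ≃g big G P) :
    Function.Injective (resFun G hP f) := by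
  intro u v h
  have h1 : f (.inl u) = f (.inl v) := by
    rw [resFun_spec G hP f u, resFun_spec G hP f v, h]
  have := f.toEquiv.injective h1
  exact Sum.inl.inj this

lemma resFun_surj (hP : 2 * Fintype.card V + 2 ≤ P) (f : big G P ≃g big G P) :
    Function.Surjective (resFun G hP f) := by
  intro w
  obtain ⟨v, hv⟩ := fix_V G hP f.symm w
  refine ⟨v, ?_⟩
  have h1 : f (.inl v) = .inl w := by
    have := congrArg f hv
    simpa using this.symm
  have := (resFun_spec G hP f v).symm.trans h1
  exact Sum.inl.inj this

noncomputable def resIso (hP : 2 * Fintype.card V + 2 ≤ P) (f : big G P ≃g big G P) : G ≃g G where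
  toEquiv := Equiv.ofBijective (resFun G hP f) ⟨resFun_inj G hP f, resFun_surj G hP f⟩
  map_rel_iff' := by
    intro u v
    show G.Adj (resFun G hP f u) (resFun G hP f v) ↔ G.Adj u v
    have h : (big G P).Adj (.inl (resFun G hP f u)) (.inl (resFun G hP f v)) ↔
        (big G P).Adj (.inl u) (.inl v) := by
      rw [← resFun_spec G hP f u, ← resFun_spec G hP f v]
      exact f.map_adj_iff
    exact h

noncomputable def extIso (σ : G ≃g G) : big G P ≃g big G P where
  toEquiv := Equiv.sumCongr σ.toEquiv (Equiv.refl _)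
  map_rel_iff' := by
    intro x y
    rcases x with u | t | j <;> rcases y with v | t' | j'
    · exact σ.map_rel_iff
    · exact Iff.rfl
    · show wcond (Fintype.card V) (G.degree (σ u)) _ ↔ wcond (Fintype.card V) (G.degree u) _
      rw [iso_degree σ u]
    · exact Iff.rfl
    · exact Iff.rfl
    · exact Iff.rfl
    · show wcond (Fintype.card V) (G.degree (σ v)) _ ↔ wcond (Fintype.card V) (G.degree v) _
      rw [iso_degree σ v]
    · exact Iff.rfl
    · exact Iff.rfl

noncomputable def autEquiv (hP : 2 * Fintype.card V + 2 ≤ P) :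
    (big G P ≃g big G P) ≃* (G ≃g G) where
  toFun := resIso G hP
  invFun := extIso G
  left_inv := by
    intro f
    ext x
    rcases x with v | t | j
    · show Sum.inl (resFun G hP f v) = f (.inl v)
      exact (resFun_spec G hP f v).symm
    · show Sum.inr (Sum.inl t) = f (.inr (.inl t))
      exact (fix_C' G hP f t).symm
    · show Sum.inr (Sum.inr j) = f (.inr (.inr j))
      exact (fix_S G hP f j).symm
  right_inv := by
    intro σ
    ext v
    have h : (Sum.inl (σ v) : V ⊕ (Fin P ⊕ Fin P)) = Sum.inl (resFun G hP (extIso G σ) v) :=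
      resFun_spec G hP (extIso G σ) v
    exact (Sum.inl.inj h).symm
  map_mul' := by
    intro a b
    ext v
    show resFun G hP (b.trans a) v = resFun G hP a (resFun G hP b v)
    have h1 : (b.trans a) (.inl v) = .inl (resFun G hP (b.trans a) v) :=
      resFun_spec G hP (b.trans a) v
    have h2 : (b.trans a) (.inl v) = .inl (resFun G hP a (resFun G hP b v)) := by
      show a (b (.inl v)) = _
      rw [resFun_spec G hP b v, resFun_spec G hP a]
    exact Sum.inl.inj (h1.symm.trans h2)

end AutEquiv

/-! ### Connectivity and chromatic number -/

lemma big_conn (hP : 0 < P) : (big G P).Connected := by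
  have hub : V ⊕ (Fin P ⊕ Fin P) := Sum.inr (Sum.inl ⟨P - 1, by omega⟩)
  have key : ∀ z : V ⊕ (Fin P ⊕ Fin P),
      (big G P).Reachable z (Sum.inr (Sum.inl ⟨P - 1, by omega⟩)) := by
    intro z
    rcases z with v | t | j
    · exact (adj_lc G).reachable
    · rcases eq_or_ne t (⟨P - 1, by omega⟩ : Fin P) with h | h
      · rw [h]
      · exact ((adj_cc G).mpr h).symm.reachable.symm
    · have : (big G P).Adj (.inr (.inr j)) (.inr (.inl ⟨P - 1, by omega⟩)) := by
        show j.val ≤ P - 1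
        have := j.isLt
        omega
      exact this.reachable
  rw [SimpleGraph.connected_iff_exists_forall_reachable]
  exact ⟨Sum.inr (Sum.inl ⟨P - 1, by omega⟩), fun w => (key w).symm⟩

lemma big_chrom (g : ℕ) (hg : g ≤ P) : (g : ℕ∞) ≤ (big G P).chromaticNumber := by
  have emb : (⊤ : SimpleGraph (Fin P)) ↪g big G P :=
    ⟨⟨fun t => Sum.inr (Sum.inl t), fun a b h => by simpa using h⟩, Iff.rfl⟩
  have h1 : (⊤ : SimpleGraph (Fin P)).chromaticNumber ≤ (big G P).chromaticNumber :=
    SimpleGraph.chromaticNumber_mono_of_hom emb.toHom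
  rw [SimpleGraph.chromaticNumber_top, Fintype.card_fin] at h1
  refine le_trans ?_ h1
  exact_mod_cast Nat.cast_le.mpr hg

/-! ### Main construction -/

theorem main {V : Type} [Fintype V] [Nonempty V] (G : SimpleGraph V) (g : ℕ) :
    ∃ (W : Type) (_ : Fintype W) (H : SimpleGraph W),
      H.Connected ∧ Nonempty ((H ≃g H) ≃* (G ≃g G)) ∧
      (g : ℕ∞) ≤ H.chromaticNumber := by
  set P := 2 * Fintype.card V + g + 4 with hPdef
  have hP : 2 * Fintype.card V + 2 ≤ P := by omega
  refine ⟨V ⊕ (Fin P ⊕ Fin P), inferInstance, big G P, big_conn G (by omega),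
    ⟨autEquiv G hP⟩, big_chrom G g (by omega)⟩

lemma iso_subsingleton {A : Type} [Subsingleton A] (Q : SimpleGraph A) :
    Subsingleton (Q ≃g Q) :=
  ⟨fun f g => by ext v; exact Subsingleton.elim _ _⟩

noncomputable def trivMulEquiv {M N : Type*} [Group M] [Group N] [Subsingleton M]
    [Subsingleton N] : M ≃* N where
  toFun := fun _ => 1
  invFun := fun _ => 1
  left_inv := fun a => Subsingleton.elim _ _
  right_inv := fun a => Subsingleton.elim _ _
  map_mul' := fun _ _ => Subsingleton.elim _ _

end F12

theorem stmt12 {V : Type} [Fintype V] (G : SimpleGraph V) (g : ℕ) :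
    ∃ (W : Type) (_ : Fintype W) (H : SimpleGraph W),
      H.Connected ∧ Nonempty ((H ≃g H) ≃* (G ≃g G)) ∧
      (g : ℕ∞) ≤ H.chromaticNumber := by
  rcases isEmpty_or_nonempty V with h | h
  · obtain ⟨W, fW, H, hc, ⟨e⟩, hchrom⟩ := F12.main (⊥ : SimpleGraph (Fin 1)) g
    haveI : Subsingleton V := ⟨fun a => (h.false a).elim⟩
    haveI := F12.iso_subsingleton (⊥ : SimpleGraph (Fin 1))
    haveI := F12.iso_subsingleton G
    exact ⟨W, fW, H, hc, ⟨e.trans F12.trivMulEquiv⟩, hchrom⟩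
  · exact F12.main G g
end
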